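/- Suppose n ≥ a is written as n = q·a + r with 0 ≤ r < a, and suppose r < δ − a and w(n) − δ ∉ W0. Then (w(n) − δ) − b ∈ W0; more precisely, w(n) − w(n − (δ − a)) = 2b − a. -/
import Mathlib


/-- `w a b δ n = n + a⌊n/a⌋ + b⌊n/δ⌋`. -/
def w (a b δ n : ℕ) : ℕ := n + a * (n / a) + b * (n / δ)

/-- `W0` is the image of `w`. -/
def W0 (a b δ : ℕ) : Set ℕ := Set.range (w a b δ)

/-- Suppose `n ≥ a`, with remainder `r = n % a` satisfying `r < δ - a`, and
`w n - δ ∉ W0`. Then `(w n - δ) - b ∈ W0`; more precisely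
`w n - w (n - (δ - a)) = 2b - a`. -/
theorem stmt_6 (a δ : ℕ) (ha : 0 < a) (hlt : a < δ) (hlt2 : δ < 2 * a)
    (hgcd : Nat.gcd a δ = 1) (b : ℕ) (hb : b = a + δ) :
    ∀ n : ℕ, a ≤ n → n % a < δ - a → w a b δ n - δ ∉ W0 a b δ →
      (w a b δ n - δ) - b ∈ W0 a b δ ∧
      w a b δ n - w a b δ (n - (δ - a)) = 2 * b - a := by
  intro n hn hr hnot
  have hδ : 0 < δ := by omega
  obtain ⟨d, hd⟩ : ∃ d, δ - a = d := ⟨_, rfl⟩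
  rw [hd] at hr ⊢
  have hd0 : 0 < d := by omega
  have hda : d < a := by omega
  have hna : a * (n / a) + n % a = n := Nat.div_add_mod n a
  have hrA : n % a < a := Nat.mod_lt _ ha
  have hq1 : 1 ≤ n / a := (Nat.one_le_div_iff ha).mpr hn
  obtain ⟨q', hq'⟩ : ∃ q', n / a = q' + 1 := ⟨n / a - 1, by omega⟩
  have key1 : n - d = a * q' + (a + n % a - d) := by
    rw [hq', Nat.mul_succ] at hna
    generalize a * q' = X at hna ⊢
    omega
  have h1 : (n - d) / a = q' := by
    rw [key1, Nat.mul_add_div ha, Nat.div_eq_of_lt (by omega)]; omega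
  have hnδ : δ * (n / δ) + n % δ = n := Nat.div_add_mod n δ
  have hrB : n % δ < δ := Nat.mod_lt _ hδ
  by_cases hc : d ≤ n % δ
  · exfalso
    have key2 : n - d = δ * (n / δ) + (n % δ - d) := by
      generalize δ * (n / δ) = X at hnδ ⊢
      omega
    have h2 : (n - d) / δ = n / δ := by
      rw [key2, Nat.mul_add_div hδ,
        Nat.div_eq_of_lt (lt_of_le_of_lt (Nat.sub_le _ _) hrB)]; omega
    have E : w a b δ (n - d) + δ = w a b δ n := by
      unfold w
      rw [h1, h2, hq', Nat.mul_succ]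
      generalize a * q' = X
      generalize b * (n / δ) = Y
      omega
    exact hnot ⟨n - d, by omega⟩
  · push_neg at hc
    have hnδ1 : δ ≤ n := by
      by_contra h
      push_neg at h
      rw [Nat.mod_eq_of_lt h] at hc
      omega
    have hq2 : 1 ≤ n / δ := (Nat.one_le_div_iff hδ).mpr hnδ1
    obtain ⟨q2', hq2'⟩ : ∃ q2', n / δ = q2' + 1 := ⟨n / δ - 1, by omega⟩
    have key2 : n - d = δ * q2' + (δ + n % δ - d) := by
      rw [hq2', Nat.mul_succ] at hnδ
      generalize δ * q2' = X at hnδ ⊢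
      omega
    have h2 : (n - d) / δ = q2' := by
      rw [key2, Nat.mul_add_div hδ, Nat.div_eq_of_lt (by omega)]; omega
    have E : w a b δ n = w a b δ (n - d) + (2 * b - a) := by
      unfold w
      rw [h1, h2, hq', hq2', Nat.mul_succ, Nat.mul_succ]
      generalize a * q' = X
      generalize b * q2' = Y
      omega
    refine ⟨⟨n - d, by omega⟩, by omega⟩
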